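/- arXiv:2508.17301 — 3 statements merged into one kernel-verified Lean document; each statement's English description precedes it below -/
import Mathlib

section
/- Suppose {1, …, n} = V₁ ∪ V₂ is a partition into two nonempty disjoint sets such that: w₁ is constant on V₁ and constant on V₂, with the value on V₁ strictly greater than the value on V₂; and ψ is constant on V₁ and constant on V₂ (these symmetry properties hold for non-regular networks with two types of nodes, such as core–periphery and complete bipartite networks). Assume also that a is not proportional to 𝟙 and that G is non-regular. (i) If (Σ_{i∈V₁} aᵢ)/|V₁| > (Σ_{j∈V₂} aⱼ)/|V₂|, then there exists δ̄ ∈ [0, 1/λ₁) such that for every δ ∈ (δ̄, 1/λ₁): V(p⁰(δ), δ) > V(p^ur, δ) and Π(p⁰(δ), δ) < Π(p^ur, δ). (ii) If (Σ_{i∈V₁} aᵢ)/|V₁| < (Σ_{j∈V₂} aⱼ)/|V₂|, then there exists δ̿ ∈ [0, 1/λ₁) such that for every δ ∈ (δ̿, 1/λ₁): V(p⁰(δ), δ) < V(p^ur, δ) and Π(p⁰(δ), δ) < Π(p^ur, δ). -/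
open Matrix

noncomputable def Hmat {n : ℕ} (G : Matrix (Fin n) (Fin n) ℝ) (δ : ℝ) :
    Matrix (Fin n) (Fin n) ℝ :=
  (1 - δ • G)⁻¹

/-- Monopolist profit Π(p) = (p − c)ᵀ H (a − p). -/
noncomputable def profit {n : ℕ} (G : Matrix (Fin n) (Fin n) ℝ) (δ : ℝ)
    (a c p : Fin n → ℝ) : ℝ :=
  (p - c) ⬝ᵥ (Hmat G δ *ᵥ (a - p))

/-- Aggregate consumer surplus V(p) = (1/2)(a − p)ᵀ H² (a − p). -/
noncomputable def surplus {n : ℕ} (G : Matrix (Fin n) (Fin n) ℝ) (δ : ℝ)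
    (a p : Fin n → ℝ) : ℝ :=
  (1 / 2 : ℝ) * ((a - p) ⬝ᵥ ((Hmat G δ * Hmat G δ) *ᵥ (a - p)))

/-- Unrestricted optimal price p^ur = (a + c)/2. -/
noncomputable def pUR {n : ℕ} (a c : Fin n → ℝ) : Fin n → ℝ :=
  (1 / 2 : ℝ) • (a + c)

/-- The Pareto price family 𝕡(η). -/
noncomputable def pFam {n : ℕ} (G : Matrix (Fin n) (Fin n) ℝ) (δ : ℝ)
    (a c : Fin n → ℝ) (η : ℝ) : Fin n → ℝ :=
  pUR a c - (η / (2 - η)) • ((1 - (2 * δ / (2 - η)) • G)⁻¹ *ᵥ ((1 / 2 : ℝ) • (a - c)))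

/-- The all-ones vector 𝟙. -/
def onesVec (n : ℕ) : Fin n → ℝ := fun _ => 1

/-- The sufficient statistic 𝒜(p) = ⟨w₁, p − p^ur⟩ / ⟨w₁, (a−c)/2⟩. -/
noncomputable def AAstat {n : ℕ} (w1 a c p : Fin n → ℝ) : ℝ :=
  (w1 ⬝ᵥ (p - pUR a c)) / (w1 ⬝ᵥ ((1 / 2 : ℝ) • (a - c)))

/-- Profit ratio R_Π(p, δ). -/
noncomputable def Rpi {n : ℕ} (G : Matrix (Fin n) (Fin n) ℝ) (δ : ℝ)
    (a c p : Fin n → ℝ) : ℝ :=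
  profit G δ a c p / profit G δ a c (pUR a c)

/-- Consumer-surplus ratio R_V(p, δ). -/
noncomputable def Rv {n : ℕ} (G : Matrix (Fin n) (Fin n) ℝ) (δ : ℝ)
    (a c p : Fin n → ℝ) : ℝ :=
  surplus G δ a p / surplus G δ a (pUR a c)

/-- The network statistic ψ. -/
noncomputable def psiVec {n : ℕ} [NeZero n] (w : Fin n → Fin n → ℝ)
    (lam : Fin n → ℝ) : Fin n → ℝ :=
  (∑ i ∈ Finset.univ.erase (0 : Fin n),
      (w i ⬝ᵥ onesVec n) ^ 2 / (1 - lam i / lam 0)) • w 0 -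
    ∑ i ∈ Finset.univ.erase (0 : Fin n),
      ((w i ⬝ᵥ onesVec n) * (w 0 ⬝ᵥ onesVec n) / (1 - lam i / lam 0)) • w i

/-- The optimal uniform price p⁰(δ) (with c = 0). -/
noncomputable def p0fn {n : ℕ} (G : Matrix (Fin n) (Fin n) ℝ) (δ : ℝ)
    (a : Fin n → ℝ) : Fin n → ℝ :=
  ((onesVec n ⬝ᵥ (Hmat G δ *ᵥ pUR a 0)) /
      (onesVec n ⬝ᵥ (Hmat G δ *ᵥ onesVec n))) • onesVec n

namespace S17

section Spectral
variable {n : ℕ} {G : Matrix (Fin n) (Fin n) ℝ} {w : Fin n → Fin n → ℝ} {lam : Fin n → ℝ} {δ : ℝ}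

lemma cmpl (horth : ∀ i j, w i ⬝ᵥ w j = if i = j then (1 : ℝ) else 0) :
    ∀ k l, ∑ i, w i k * w i l = if k = l then (1:ℝ) else 0 := by
  have h1 : (Matrix.of w) * (Matrix.of w)ᵀ = 1 := by
    ext i j
    simpa [Matrix.mul_apply, Matrix.one_apply, dotProduct] using horth i j
  have h2 : (Matrix.of w)ᵀ * (Matrix.of w) = 1 := by
    rw [mul_eq_one_comm] at h1; exact h1
  intro k l
  have := congrFun (congrFun h2 k) l
  simpa [Matrix.mul_apply, Matrix.one_apply] using this

lemma expand (horth : ∀ i j, w i ⬝ᵥ w j = if i = j then (1 : ℝ) else 0)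
    (x : Fin n → ℝ) (k : Fin n) : ∑ i, (w i ⬝ᵥ x) * w i k = x k := by
  have hc := cmpl horth
  calc ∑ i, (w i ⬝ᵥ x) * w i k = ∑ i, ∑ l, w i k * w i l * x l := by
        apply Finset.sum_congr rfl; intro i _
        simp only [dotProduct, Finset.sum_mul]
        apply Finset.sum_congr rfl; intro l _; ring
    _ = ∑ l, (∑ i, w i k * w i l) * x l := by
        rw [Finset.sum_comm]; simp [Finset.sum_mul]
    _ = x k := by
        simp [hc, Finset.sum_ite_eq' Finset.univ k]

lemma Hmat_eq (heig : ∀ i, G *ᵥ w i = lam i • w i)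
    (hne : ∀ i, 1 - δ * lam i ≠ 0)
    (hc : ∀ k l, ∑ i, w i k * w i l = if k = l then (1:ℝ) else 0) :
    Hmat G δ = Matrix.of fun k l => ∑ i, (1 - δ * lam i)⁻¹ * (w i k * w i l) := by
  unfold Hmat
  apply Matrix.inv_eq_right_inv
  ext k l
  have hMw : ∀ i, ∑ jj, (1 - δ • G) k jj * w i jj = (1 - δ * lam i) * w i k := by
    intro i
    have h1 : ((1 - δ • G) *ᵥ w i) k = ((1:ℝ) - δ * lam i) * w i k := by
      rw [Matrix.sub_mulVec, Matrix.one_mulVec, Matrix.smul_mulVec, heig i]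
      simp [smul_smul]; ring
    simpa [Matrix.mulVec, dotProduct] using h1
  rw [Matrix.mul_apply]
  simp only [Matrix.of_apply, Finset.mul_sum]
  rw [Finset.sum_comm]
  calc ∑ i, ∑ j, (1 - δ • G) k j * ((1 - δ * lam i)⁻¹ * (w i j * w i l))
      = ∑ i, (1 - δ * lam i)⁻¹ * ((∑ j, (1 - δ • G) k j * w i j) * w i l) := by
        apply Finset.sum_congr rfl; intro i _
        rw [Finset.sum_mul, Finset.mul_sum]
        apply Finset.sum_congr rfl; intro j _; ring
    _ = ∑ i, w i k * w i l := by
        apply Finset.sum_congr rfl; intro i _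
        rw [hMw i, inv_mul_eq_div, eq_comm, eq_div_iff (hne i)]; ring
    _ = (1 : Matrix (Fin n) (Fin n) ℝ) k l := by rw [hc k l, Matrix.one_apply]

lemma Hmat_mulVec
    (hH : Hmat G δ = Matrix.of fun k l => ∑ i, (1 - δ * lam i)⁻¹ * (w i k * w i l))
    (y : Fin n → ℝ) :
    Hmat G δ *ᵥ y = fun k => ∑ i, (w i ⬝ᵥ y) / (1 - δ * lam i) * w i k := by
  funext k
  rw [hH]
  simp only [Matrix.mulVec, dotProduct, Matrix.of_apply, Finset.sum_mul]
  rw [Finset.sum_comm]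
  apply Finset.sum_congr rfl; intro i _
  simp only [dotProduct, Finset.sum_div, Finset.sum_mul]
  apply Finset.sum_congr rfl; intro l _
  field_simp

lemma dot_sum_wi (x : Fin n → ℝ) (c : Fin n → ℝ) :
    x ⬝ᵥ (fun k => ∑ i, c i * w i k) = ∑ i, c i * (w i ⬝ᵥ x) := by
  simp only [dotProduct, Finset.mul_sum]
  rw [Finset.sum_comm]
  apply Finset.sum_congr rfl; intro i _
  apply Finset.sum_congr rfl; intro k _; ring

lemma quadH
    (hH : Hmat G δ = Matrix.of fun k l => ∑ i, (1 - δ * lam i)⁻¹ * (w i k * w i l))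
    (x y : Fin n → ℝ) :
    x ⬝ᵥ (Hmat G δ *ᵥ y) = ∑ i, (w i ⬝ᵥ x) * (w i ⬝ᵥ y) / (1 - δ * lam i) := by
  rw [Hmat_mulVec hH, dot_sum_wi]
  apply Finset.sum_congr rfl; intro i _; ring

lemma quadH2
    (horth : ∀ i j, w i ⬝ᵥ w j = if i = j then (1 : ℝ) else 0)
    (hH : Hmat G δ = Matrix.of fun k l => ∑ i, (1 - δ * lam i)⁻¹ * (w i k * w i l))
    (x y : Fin n → ℝ) :
    x ⬝ᵥ ((Hmat G δ * Hmat G δ) *ᵥ y) = ∑ i, (w i ⬝ᵥ x) * (w i ⬝ᵥ y) / (1 - δ * lam i)^2 := by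
  rw [← Matrix.mulVec_mulVec]
  have h1 : ∀ i, w i ⬝ᵥ (Hmat G δ *ᵥ y) = (w i ⬝ᵥ y) / (1 - δ * lam i) := by
    intro i
    rw [Hmat_mulVec hH, dot_sum_wi]
    rw [Finset.sum_eq_single i]
    · rw [horth i i]; simp
    · intro j _ hj; rw [horth j i, if_neg hj]; ring
    · intro h; exact absurd (Finset.mem_univ i) h
  rw [quadH hH]
  apply Finset.sum_congr rfl; intro i _
  rw [h1 i, ← mul_div_assoc, div_div, ← sq]
end Spectral


variable {n : ℕ}

noncomputable def Av (w : Fin n → Fin n → ℝ) (a : Fin n → ℝ) (i : Fin n) : ℝ :=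
  w i ⬝ᵥ ((1/2 : ℝ) • a)

noncomputable def Bv (w : Fin n → Fin n → ℝ) (i : Fin n) : ℝ := w i ⬝ᵥ onesVec n

noncomputable def eF (lam : Fin n → ℝ) (i : Fin n) (δ : ℝ) : ℝ := 1 - δ * lam i

section NZ
variable [NeZero n]

noncomputable def S1F (w : Fin n → Fin n → ℝ) (lam : Fin n → ℝ) (δ : ℝ) : ℝ :=
  ∑ i ∈ Finset.univ.erase (0 : Fin n), (Bv w i)^2 / eF lam i δ

noncomputable def SmF (w : Fin n → Fin n → ℝ) (lam : Fin n → ℝ) (a : Fin n → ℝ) (δ : ℝ) : ℝ :=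
  ∑ i ∈ Finset.univ.erase (0 : Fin n), Bv w i * Av w a i / eF lam i δ

noncomputable def denF (w : Fin n → Fin n → ℝ) (lam : Fin n → ℝ) (δ : ℝ) : ℝ :=
  (Bv w 0)^2 + eF lam 0 δ * S1F w lam δ

noncomputable def uF (w : Fin n → Fin n → ℝ) (lam : Fin n → ℝ) (a : Fin n → ℝ) (δ : ℝ) : ℝ :=
  (Bv w 0 * Av w a 0 + eF lam 0 δ * SmF w lam a δ) / denF w lam δ

noncomputable def RF (w : Fin n → Fin n → ℝ) (lam : Fin n → ℝ) (a : Fin n → ℝ)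
    (i : Fin n) (δ : ℝ) : ℝ := Av w a i - uF w lam a δ * Bv w i

noncomputable def KF (w : Fin n → Fin n → ℝ) (lam : Fin n → ℝ) (a : Fin n → ℝ) (δ : ℝ) : ℝ :=
  (Av w a 0 * S1F w lam δ - Bv w 0 * SmF w lam a δ) / denF w lam δ

noncomputable def FremF (w : Fin n → Fin n → ℝ) (lam : Fin n → ℝ) (a : Fin n → ℝ) (δ : ℝ) : ℝ :=
  ∑ i ∈ Finset.univ.erase (0 : Fin n),
    (Av w a i * RF w lam a i δ + (1/2 : ℝ) * (RF w lam a i δ)^2) / (eF lam i δ)^2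

noncomputable def GFn (w : Fin n → Fin n → ℝ) (lam : Fin n → ℝ) (a : Fin n → ℝ) (δ : ℝ) : ℝ :=
  Av w a 0 * KF w lam a δ + (1/2 : ℝ) * eF lam 0 δ * (KF w lam a δ)^2 +
    eF lam 0 δ * FremF w lam a δ

variable {w : Fin n → Fin n → ℝ} {lam : Fin n → ℝ} {a : Fin n → ℝ}

lemma eF_pos (hlam0 : 0 < lam 0) (hle : ∀ i, lam i ≤ lam 0) {δ : ℝ}
    (h0 : 0 ≤ δ) (h1 : δ < 1 / lam 0) (i : Fin n) : 0 < eF lam i δ := by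
  have h2 : δ * lam i ≤ δ * lam 0 := mul_le_mul_of_nonneg_left (hle i) h0
  have h3 : δ * lam 0 < 1 := by
    rw [lt_div_iff₀ hlam0] at h1; linarith
  simp only [eF]; linarith

lemma eF_c_pos (hlam0 : 0 < lam 0) {i : Fin n} (hi : lam i < lam 0) :
    0 < eF lam i (1 / lam 0) := by
  have : (1 / lam 0) * lam i < 1 := by
    rw [one_div, inv_mul_lt_iff₀ hlam0]; linarith
  simp only [eF]; linarith

lemma eF_c_zero (hlam0 : 0 < lam 0) : eF lam (0 : Fin n) (1 / lam 0) = 0 := by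
  simp only [eF]; field_simp; norm_num

lemma eF_cont (i : Fin n) : Continuous (eF lam i) := by
  show Continuous (fun δ : ℝ => 1 - δ * lam i)
  exact continuous_const.sub (continuous_id.mul continuous_const)

set_option linter.unusedSectionVars false

lemma S1F_contAt (hlam0 : 0 < lam 0) (hgap : ∀ i, i ≠ 0 → lam i < lam 0) :
    ContinuousAt (S1F w lam) (1 / lam 0) := by
  apply (tendsto_finset_sum _ (fun i hi => ?_) : Filter.Tendsto _ _ _)
  exact (continuousAt_const.div ((eF_cont i).continuousAt)
    (ne_of_gt (eF_c_pos hlam0 (hgap i (Finset.mem_erase.mp hi).1))))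

lemma SmF_contAt (hlam0 : 0 < lam 0) (hgap : ∀ i, i ≠ 0 → lam i < lam 0) :
    ContinuousAt (SmF w lam a) (1 / lam 0) := by
  apply (tendsto_finset_sum _ (fun i hi => ?_) : Filter.Tendsto _ _ _)
  exact (continuousAt_const.div ((eF_cont i).continuousAt)
    (ne_of_gt (eF_c_pos hlam0 (hgap i (Finset.mem_erase.mp hi).1))))

lemma denF_contAt (hlam0 : 0 < lam 0) (hgap : ∀ i, i ≠ 0 → lam i < lam 0) :
    ContinuousAt (denF w lam) (1 / lam 0) := by
  exact continuousAt_const.add (((eF_cont 0).continuousAt).mul (S1F_contAt hlam0 hgap))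

lemma denF_c (hlam0 : 0 < lam 0) : denF w lam (1 / lam 0) = (Bv w 0)^2 := by
  simp only [denF]; rw [eF_c_zero hlam0]; ring

lemma KF_contAt (hlam0 : 0 < lam 0) (hgap : ∀ i, i ≠ 0 → lam i < lam 0)
    (hB0 : Bv w 0 ≠ 0) : ContinuousAt (KF w lam a) (1 / lam 0) := by
  apply ContinuousAt.div
  · exact (continuousAt_const.mul (S1F_contAt hlam0 hgap)).sub
      (continuousAt_const.mul (SmF_contAt hlam0 hgap))
  · exact denF_contAt hlam0 hgap
  · rw [denF_c hlam0]; exact pow_ne_zero 2 hB0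

lemma uF_contAt (hlam0 : 0 < lam 0) (hgap : ∀ i, i ≠ 0 → lam i < lam 0)
    (hB0 : Bv w 0 ≠ 0) : ContinuousAt (uF w lam a) (1 / lam 0) := by
  apply ContinuousAt.div
  · exact continuousAt_const.add (((eF_cont 0).continuousAt).mul (SmF_contAt hlam0 hgap))
  · exact denF_contAt hlam0 hgap
  · rw [denF_c hlam0]; exact pow_ne_zero 2 hB0

lemma FremF_contAt (hlam0 : 0 < lam 0) (hgap : ∀ i, i ≠ 0 → lam i < lam 0)
    (hB0 : Bv w 0 ≠ 0) : ContinuousAt (FremF w lam a) (1 / lam 0) := by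
  apply (tendsto_finset_sum _ (fun i hi => ?_) : Filter.Tendsto _ _ _)
  have hR : ContinuousAt (RF w lam a i) (1 / lam 0) :=
    continuousAt_const.sub ((uF_contAt hlam0 hgap hB0).mul continuousAt_const)
  apply ContinuousAt.div
  · exact (continuousAt_const.mul hR).add (continuousAt_const.mul (hR.pow 2))
  · exact ((eF_cont i).continuousAt).pow 2
  · exact pow_ne_zero 2 (ne_of_gt (eF_c_pos hlam0 (hgap i (Finset.mem_erase.mp hi).1)))

lemma GFn_contAt (hlam0 : 0 < lam 0) (hgap : ∀ i, i ≠ 0 → lam i < lam 0)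
    (hB0 : Bv w 0 ≠ 0) : ContinuousAt (GFn w lam a) (1 / lam 0) := by
  exact ((continuousAt_const.mul (KF_contAt hlam0 hgap hB0)).add
    (((continuousAt_const.mul ((eF_cont 0).continuousAt)).mul
      ((KF_contAt hlam0 hgap hB0).pow 2)))).add
    (((eF_cont 0).continuousAt).mul (FremF_contAt hlam0 hgap hB0))

lemma GFn_c (hlam0 : 0 < lam 0) :
    GFn w lam a (1 / lam 0) =
      Av w a 0 * ((Av w a 0 * S1F w lam (1 / lam 0) - Bv w 0 * SmF w lam a (1 / lam 0)) /
        (Bv w 0)^2) := by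
  simp only [GFn, KF]; rw [eF_c_zero hlam0, denF_c hlam0]; ring

lemma GFn_tendsto (hlam0 : 0 < lam 0) (hgap : ∀ i, i ≠ 0 → lam i < lam 0)
    (hB0 : Bv w 0 ≠ 0) :
    Filter.Tendsto (GFn w lam a) (nhdsWithin (1 / lam 0) (Set.Iio (1 / lam 0)))
      (nhds (GFn w lam a (1 / lam 0))) :=
  ((GFn_contAt hlam0 hgap hB0).tendsto).mono_left nhdsWithin_le_nhds

end NZ

section Main
variable {n : ℕ} [NeZero n] {G : Matrix (Fin n) (Fin n) ℝ} {w : Fin n → Fin n → ℝ}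
  {lam : Fin n → ℝ} {a : Fin n → ℝ}

set_option linter.unusedSectionVars false

lemma pUR_zero (a : Fin n → ℝ) : pUR a 0 = (1/2 : ℝ) • a := by
  funext k; simp [pUR]

lemma a_sub_pUR (a : Fin n → ℝ) : a - pUR a 0 = (1/2 : ℝ) • a := by
  funext k; simp [pUR]; ring

lemma sum_dot {ι : Type*} (s : Finset ι) (f : ι → Fin n → ℝ) (x : Fin n → ℝ) :
    (∑ i ∈ s, f i) ⬝ᵥ x = ∑ i ∈ s, f i ⬝ᵥ x := by
  simp only [dotProduct, Finset.sum_apply, Finset.sum_mul]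
  exact Finset.sum_comm

lemma psi_dot (hlam0 : 0 < lam 0) (x : Fin n → ℝ) :
    psiVec w lam ⬝ᵥ x
      = S1F w lam (1/lam 0) * (w 0 ⬝ᵥ x)
        - Bv w 0 * ∑ i ∈ Finset.univ.erase (0 : Fin n),
            Bv w i * (w i ⬝ᵥ x) / eF lam i (1/lam 0) := by
  have hee : ∀ i : Fin n, (1:ℝ) - lam i / lam 0 = eF lam i (1/lam 0) := by
    intro i; simp only [eF]; rw [div_eq_mul_inv, one_div]; ring
  unfold psiVec
  rw [sub_dotProduct, smul_dotProduct, sum_dot, smul_eq_mul]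
  congr 1
  · simp only [hee]; rfl
  · rw [Finset.mul_sum]
    apply Finset.sum_congr rfl; intro i _
    rw [smul_dotProduct, smul_eq_mul, hee]
    simp only [Bv]; ring

lemma keyId (horth : ∀ i j, w i ⬝ᵥ w j = if i = j then (1 : ℝ) else 0)
    (heig : ∀ i, G *ᵥ w i = lam i • w i)
    (hlam0 : 0 < lam 0) (hle : ∀ i, lam i ≤ lam 0)
    (hB0 : Bv w 0 ≠ 0)
    {δ : ℝ} (hδ0 : 0 ≤ δ) (hδ1 : δ < 1 / lam 0) :
    eF lam 0 δ * (surplus G δ a (p0fn G δ a) - surplus G δ a (pUR a 0))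
      = GFn w lam a δ := by
  have hepos : ∀ i, 0 < eF lam i δ := eF_pos hlam0 hle hδ0 hδ1
  have hne : ∀ i, 1 - δ * lam i ≠ 0 := fun i => ne_of_gt (hepos i)
  have he0 : eF lam 0 δ ≠ 0 := ne_of_gt (hepos 0)
  have hH := Hmat_eq heig hne (cmpl horth)
  have hS1nn : 0 ≤ S1F w lam δ :=
    Finset.sum_nonneg fun i _ => div_nonneg (sq_nonneg _) (le_of_lt (hepos i))
  have hdpos : 0 < denF w lam δ := by
    have h1 : 0 < (Bv w 0)^2 := by positivity
    have h2 : 0 ≤ eF lam 0 δ * S1F w lam δ := mul_nonneg (le_of_lt (hepos 0)) hS1nn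
    simp only [denF]; linarith
  have hdne : denF w lam δ ≠ 0 := ne_of_gt hdpos
  have hdne' : (Bv w 0)^2 + eF lam 0 δ * S1F w lam δ ≠ 0 := hdne
  have hsplitABe : (∑ i, (w i ⬝ᵥ onesVec n) * (w i ⬝ᵥ ((1/2:ℝ)•a)) / (1 - δ * lam i))
      = Bv w 0 * Av w a 0 / eF lam 0 δ + SmF w lam a δ := by
    rw [← Finset.add_sum_erase _ _ (Finset.mem_univ (0 : Fin n))]
    rfl
  have hsplitB2 : (∑ i, (w i ⬝ᵥ onesVec n) * (w i ⬝ᵥ onesVec n) / (1 - δ * lam i))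
      = (Bv w 0)^2 / eF lam 0 δ + S1F w lam δ := by
    rw [← Finset.add_sum_erase _ _ (Finset.mem_univ (0 : Fin n))]
    simp only [S1F, Bv, eF, pow_two]
  have hκ : p0fn G δ a = uF w lam a δ • onesVec n := by
    unfold p0fn
    rw [pUR_zero, quadH hH, quadH hH, hsplitABe, hsplitB2]
    congr 1
    have h1 : Bv w 0 * Av w a 0 / eF lam 0 δ + SmF w lam a δ
        = (Bv w 0 * Av w a 0 + eF lam 0 δ * SmF w lam a δ) / eF lam 0 δ := by
      field_simp
    have h2 : (Bv w 0)^2 / eF lam 0 δ + S1F w lam δ = denF w lam δ / eF lam 0 δ := by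
      simp only [denF]; field_simp
    rw [h1, h2, div_div_div_cancel_right₀ he0]
    rfl
  have hadot : ∀ i, w i ⬝ᵥ a = 2 * Av w a i := by
    intro i; simp only [Av, dotProduct_smul, smul_eq_mul]; ring
  have hd0 : ∀ i, w i ⬝ᵥ (a - p0fn G δ a) = Av w a i + RF w lam a i δ := by
    intro i
    rw [hκ, dotProduct_sub, dotProduct_smul, smul_eq_mul, hadot]
    simp only [RF, Bv]; ring
  have hdur : ∀ i, w i ⬝ᵥ (a - pUR a 0) = Av w a i := by
    intro i; rw [a_sub_pUR]; rfl
  have hsur0 : surplus G δ a (p0fn G δ a)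
      = (1/2:ℝ) * ∑ i, (Av w a i + RF w lam a i δ)^2 / (eF lam i δ)^2 := by
    unfold surplus
    rw [quadH2 horth hH]
    congr 1
    apply Finset.sum_congr rfl; intro i _
    rw [hd0 i, ← pow_two]
    rfl
  have hsurur : surplus G δ a (pUR a 0)
      = (1/2:ℝ) * ∑ i, (Av w a i)^2 / (eF lam i δ)^2 := by
    unfold surplus
    rw [quadH2 horth hH]
    congr 1
    apply Finset.sum_congr rfl; intro i _
    rw [hdur i, ← pow_two]
    rfl
  have h3 : ∑ i, ((1/2:ℝ) * ((Av w a i + RF w lam a i δ)^2 / (eF lam i δ)^2)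
        - (1/2:ℝ) * ((Av w a i)^2 / (eF lam i δ)^2))
      = ∑ i, (Av w a i * RF w lam a i δ + (1/2:ℝ)*(RF w lam a i δ)^2)/(eF lam i δ)^2 :=
    Finset.sum_congr rfl (fun i _ => by ring)
  have hdiff : surplus G δ a (p0fn G δ a) - surplus G δ a (pUR a 0)
      = (Av w a 0 * RF w lam a 0 δ + (1/2:ℝ)*(RF w lam a 0 δ)^2)/(eF lam 0 δ)^2
        + FremF w lam a δ := by
    rw [hsur0, hsurur, Finset.mul_sum, Finset.mul_sum, ← Finset.sum_sub_distrib, h3,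
      ← Finset.add_sum_erase _ _ (Finset.mem_univ (0:Fin n))]
    rfl
  have hR0 : RF w lam a 0 δ = eF lam 0 δ * KF w lam a δ := by
    simp only [RF, uF, KF, denF]
    field_simp
    ring
  rw [hdiff, hR0]
  simp only [GFn]
  field_simp

lemma profitLt (horth : ∀ i j, w i ⬝ᵥ w j = if i = j then (1 : ℝ) else 0)
    (heig : ∀ i, G *ᵥ w i = lam i • w i)
    (hlam0 : 0 < lam 0) (hle : ∀ i, lam i ≤ lam 0)
    (haprop : ¬ ∃ t : ℝ, a = t • onesVec n)
    {δ : ℝ} (hδ0 : 0 ≤ δ) (hδ1 : δ < 1 / lam 0) :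
    profit G δ a 0 (p0fn G δ a) < profit G δ a 0 (pUR a 0) := by
  have hepos : ∀ i, 0 < eF lam i δ := eF_pos hlam0 hle hδ0 hδ1
  have hne : ∀ i, 1 - δ * lam i ≠ 0 := fun i => ne_of_gt (hepos i)
  have hH := Hmat_eq heig hne (cmpl horth)
  set κ := (onesVec n ⬝ᵥ (Hmat G δ *ᵥ pUR a 0)) /
      (onesVec n ⬝ᵥ (Hmat G δ *ᵥ onesVec n)) with hκdef
  have hp0 : p0fn G δ a = κ • onesVec n := rfl
  have hadot : ∀ i, w i ⬝ᵥ a = 2 * Av w a i := by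
    intro i; simp only [Av, dotProduct_smul, smul_eq_mul]; ring
  have hprof : ∀ p : Fin n → ℝ, profit G δ a 0 p
      = ∑ i, (w i ⬝ᵥ p) * (w i ⬝ᵥ (a - p)) / (1 - δ * lam i) := by
    intro p
    unfold profit
    rw [sub_zero, quadH hH]
  have hQ : ∃ i, Av w a i - κ * Bv w i ≠ 0 := by
    by_contra hQ
    push_neg at hQ
    apply haprop
    refine ⟨2 * κ, funext fun k => ?_⟩
    have hx : ∀ i, w i ⬝ᵥ ((1/2:ℝ) • a - κ • onesVec n) = 0 := by
      intro i
      have h5 := hQ i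
      simp only [Av, Bv, dotProduct_sub, dotProduct_smul, smul_eq_mul] at h5 ⊢
      linarith
    have he := expand horth ((1/2:ℝ) • a - κ • onesVec n) k
    simp only [hx, zero_mul, Finset.sum_const_zero] at he
    have : (1/2:ℝ) * a k - κ * 1 = 0 := by
      have := he.symm
      simpa [onesVec] using this
    simp only [Pi.smul_apply, onesVec, smul_eq_mul]
    linarith
  obtain ⟨i0, hi0⟩ := hQ
  have hcalc : profit G δ a 0 (pUR a 0) - profit G δ a 0 (p0fn G δ a)
      = ∑ i, (Av w a i - κ * Bv w i)^2 / (1 - δ * lam i) := by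
    rw [hprof, hprof, hp0]
    rw [← Finset.sum_sub_distrib]
    apply Finset.sum_congr rfl; intro i _
    have h1 : w i ⬝ᵥ pUR a 0 = Av w a i := by rw [pUR_zero]; rfl
    have h2 : w i ⬝ᵥ (a - pUR a 0) = Av w a i := by rw [a_sub_pUR]; rfl
    have h3 : w i ⬝ᵥ (κ • onesVec n) = κ * Bv w i := by
      rw [dotProduct_smul, smul_eq_mul]; rfl
    have h4 : w i ⬝ᵥ (a - κ • onesVec n) = 2 * Av w a i - κ * Bv w i := by
      rw [dotProduct_sub, h3, hadot]
    rw [h1, h2, h3, h4]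
    ring
  have hpos : 0 < ∑ i, (Av w a i - κ * Bv w i)^2 / (1 - δ * lam i) := by
    apply Finset.sum_pos'
    · intro i _
      exact div_nonneg (sq_nonneg _) (le_of_lt (hepos i))
    · exact ⟨i0, Finset.mem_univ i0, div_pos (by positivity) (hepos i0)⟩
  linarith
end Main

end S17


theorem stmt17 {n : ℕ} [NeZero n]
    (G : Matrix (Fin n) (Fin n) ℝ) (hGsym : G.IsSymm)
    (hGnn : ∀ i j, 0 ≤ G i j) (hGdiag : ∀ i, G i i = 0)
    (w : Fin n → Fin n → ℝ) (lam : Fin n → ℝ)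
    (horth : ∀ i j, w i ⬝ᵥ w j = if i = j then (1 : ℝ) else 0)
    (heig : ∀ i, G *ᵥ w i = lam i • w i)
    (hgap : ∀ i, i ≠ 0 → lam i < lam 0)
    (hlam0 : 0 < lam 0)
    (hw0 : ∀ k, 0 < w 0 k)
    (hpd : ∀ δ ∈ Set.Ico (0 : ℝ) (1 / lam 0), (Hmat G δ).PosDef)
    (a : Fin n → ℝ) (ha : ∀ i, 0 < a i)
    (haprop : ¬ ∃ t : ℝ, a = t • onesVec n)
    (hnonreg : ∃ i : Fin n, i ≠ 0 ∧ w i ⬝ᵥ onesVec n ≠ 0)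
    (V1 V2 : Finset (Fin n)) (hV1 : V1.Nonempty) (hV2 : V2.Nonempty)
    (hdisj : Disjoint V1 V2) (hcover : V1 ∪ V2 = Finset.univ)
    (α β : ℝ) (hαβ : β < α)
    (hw0V1 : ∀ i ∈ V1, w 0 i = α) (hw0V2 : ∀ j ∈ V2, w 0 j = β)
    (ψ1 ψ2 : ℝ)
    (hψV1 : ∀ i ∈ V1, psiVec w lam i = ψ1) (hψV2 : ∀ j ∈ V2, psiVec w lam j = ψ2) :
    ((∑ j ∈ V2, a j) / (V2.card : ℝ) < (∑ i ∈ V1, a i) / (V1.card : ℝ) →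
      ∃ δbar ∈ Set.Ico (0 : ℝ) (1 / lam 0),
        ∀ δ ∈ Set.Ioo δbar (1 / lam 0),
          surplus G δ a (pUR a 0) < surplus G δ a (p0fn G δ a) ∧
          profit G δ a 0 (p0fn G δ a) < profit G δ a 0 (pUR a 0)) ∧
    ((∑ i ∈ V1, a i) / (V1.card : ℝ) < (∑ j ∈ V2, a j) / (V2.card : ℝ) →
      ∃ δbbar ∈ Set.Ico (0 : ℝ) (1 / lam 0),
        ∀ δ ∈ Set.Ioo δbbar (1 / lam 0),
          surplus G δ a (p0fn G δ a) < surplus G δ a (pUR a 0) ∧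
          profit G δ a 0 (p0fn G δ a) < profit G δ a 0 (pUR a 0)) := by
    classical
  have hle : ∀ i, lam i ≤ lam 0 := by
    intro i
    by_cases h : i = 0
    · subst h; exact le_refl _
    · exact le_of_lt (hgap i h)
  have hc0 : 0 < 1 / lam 0 := by positivity
  have hB0pos : 0 < S17.Bv w 0 := by
    have h : S17.Bv w 0 = ∑ k, w 0 k * 1 := rfl
    rw [h]
    exact Finset.sum_pos (fun k _ => by simpa using hw0 k) ⟨0, Finset.mem_univ 0⟩
  have hB0 : S17.Bv w 0 ≠ 0 := ne_of_gt hB0pos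
  have hA0pos : 0 < S17.Av w a 0 := by
    have h : S17.Av w a 0 = ∑ k, w 0 k * ((1/2:ℝ) * a k) := rfl
    rw [h]
    exact Finset.sum_pos
      (fun k _ => mul_pos (hw0 k) (by have := ha k; linarith)) ⟨0, Finset.mem_univ 0⟩
  have heec : ∀ i, i ≠ 0 → 0 < S17.eF lam i (1 / lam 0) :=
    fun i hi => S17.eF_c_pos hlam0 (hgap i hi)
  have hS1cpos : 0 < S17.S1F w lam (1 / lam 0) := by
    obtain ⟨i0, hi0ne, hi0B⟩ := hnonreg
    apply Finset.sum_pos'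
    · intro i hi
      exact div_nonneg (sq_nonneg _) (le_of_lt (heec i (Finset.mem_erase.mp hi).1))
    · refine ⟨i0, Finset.mem_erase.mpr ⟨hi0ne, Finset.mem_univ _⟩, ?_⟩
      have hBne : S17.Bv w i0 ≠ 0 := hi0B
      exact div_pos (by positivity) (heec i0 hi0ne)
  -- psi dot products
  have hpsi_one : psiVec w lam ⬝ᵥ onesVec n = 0 := by
    rw [S17.psi_dot hlam0]
    have h1 : w 0 ⬝ᵥ onesVec n = S17.Bv w 0 := rfl
    have h2 : ∑ i ∈ Finset.univ.erase (0 : Fin n),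
        S17.Bv w i * (w i ⬝ᵥ onesVec n) / S17.eF lam i (1 / lam 0)
        = S17.S1F w lam (1 / lam 0) := by
      apply Finset.sum_congr rfl; intro i _
      have h3 : w i ⬝ᵥ onesVec n = S17.Bv w i := rfl
      rw [h3, ← pow_two]
    rw [h1, h2]; ring
  have hpsi_w0 : psiVec w lam ⬝ᵥ w 0 = S17.S1F w lam (1 / lam 0) := by
    rw [S17.psi_dot hlam0]
    have h1 : w 0 ⬝ᵥ w 0 = 1 := by simpa using horth 0 0
    have h2 : ∑ i ∈ Finset.univ.erase (0 : Fin n),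
        S17.Bv w i * (w i ⬝ᵥ w 0) / S17.eF lam i (1 / lam 0) = 0 := by
      apply Finset.sum_eq_zero; intro i hi
      rw [horth i 0, if_neg (Finset.mem_erase.mp hi).1]
      simp
    rw [h1, h2]; ring
  have hpsi_m : psiVec w lam ⬝ᵥ ((1/2:ℝ) • a)
      = S17.Av w a 0 * S17.S1F w lam (1 / lam 0)
        - S17.Bv w 0 * S17.SmF w lam a (1 / lam 0) := by
    rw [S17.psi_dot hlam0]
    have h1 : w 0 ⬝ᵥ ((1/2:ℝ) • a) = S17.Av w a 0 := rfl
    have h2 : ∑ i ∈ Finset.univ.erase (0 : Fin n),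
        S17.Bv w i * (w i ⬝ᵥ ((1/2:ℝ) • a)) / S17.eF lam i (1 / lam 0)
        = S17.SmF w lam a (1 / lam 0) := rfl
    rw [h1, h2]; ring
  have hpsi_half : psiVec w lam ⬝ᵥ ((1/2:ℝ) • a) = (1/2:ℝ) * (psiVec w lam ⬝ᵥ a) := by
    rw [dotProduct_smul, smul_eq_mul]
  -- partition structure
  have hpart : ∀ x : Fin n → ℝ, psiVec w lam ⬝ᵥ x
      = ∑ k ∈ V1, psiVec w lam k * x k + ∑ k ∈ V2, psiVec w lam k * x k := by
    intro x
    have h : psiVec w lam ⬝ᵥ x = ∑ k, psiVec w lam k * x k := rfl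
    rw [h, ← hcover, Finset.sum_union hdisj]
  have honeV : ψ1 * (V1.card : ℝ) + ψ2 * (V2.card : ℝ) = 0 := by
    have h := hpsi_one
    rw [hpart] at h
    have e1 : ∑ k ∈ V1, psiVec w lam k * onesVec n k = V1.card • ψ1 := by
      rw [← Finset.sum_const]
      apply Finset.sum_congr rfl; intro k hk; rw [hψV1 k hk]; simp [onesVec]
    have e2 : ∑ k ∈ V2, psiVec w lam k * onesVec n k = V2.card • ψ2 := by
      rw [← Finset.sum_const]
      apply Finset.sum_congr rfl; intro k hk; rw [hψV2 k hk]; simp [onesVec]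
    rw [e1, e2, nsmul_eq_mul, nsmul_eq_mul] at h
    linarith
  have hw0V : ψ1 * α * (V1.card : ℝ) + ψ2 * β * (V2.card : ℝ)
      = S17.S1F w lam (1 / lam 0) := by
    have h := hpsi_w0
    rw [hpart] at h
    have e1 : ∑ k ∈ V1, psiVec w lam k * w 0 k = V1.card • (ψ1 * α) := by
      rw [← Finset.sum_const]
      apply Finset.sum_congr rfl; intro k hk; rw [hψV1 k hk, hw0V1 k hk]
    have e2 : ∑ k ∈ V2, psiVec w lam k * w 0 k = V2.card • (ψ2 * β) := by
      rw [← Finset.sum_const]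
      apply Finset.sum_congr rfl; intro k hk; rw [hψV2 k hk, hw0V2 k hk]
    rw [e1, e2, nsmul_eq_mul, nsmul_eq_mul] at h
    linarith
  have hψ1k1 : ψ1 * (V1.card : ℝ) * (α - β) = S17.S1F w lam (1 / lam 0) := by
    linear_combination hw0V - β * honeV
  have hψ1pos : 0 < ψ1 * (V1.card : ℝ) := by
    by_contra hcon
    push_neg at hcon
    have h1 : 0 ≤ α - β := by linarith
    have h2 : ψ1 * (V1.card : ℝ) * (α - β) ≤ 0 := mul_nonpos_of_nonpos_of_nonneg hcon h1
    linarith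
  have k1pos : (0:ℝ) < V1.card := by exact_mod_cast Finset.card_pos.mpr hV1
  have k2pos : (0:ℝ) < V2.card := by exact_mod_cast Finset.card_pos.mpr hV2
  have hpsia : psiVec w lam ⬝ᵥ a
      = (ψ1 * (V1.card : ℝ)) * ((∑ k ∈ V1, a k) / (V1.card : ℝ)
          - (∑ k ∈ V2, a k) / (V2.card : ℝ)) := by
    have h1 : psiVec w lam ⬝ᵥ a = ψ1 * (∑ k ∈ V1, a k) + ψ2 * (∑ k ∈ V2, a k) := by
      rw [hpart]
      congr 1
      · rw [Finset.mul_sum]; apply Finset.sum_congr rfl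
        intro k hk; rw [hψV1 k hk]
      · rw [Finset.mul_sum]; apply Finset.sum_congr rfl
        intro k hk; rw [hψV2 k hk]
    have hψ2' : ψ2 = -(ψ1 * (V1.card : ℝ)) / (V2.card : ℝ) := by
      rw [eq_div_iff (ne_of_gt k2pos)]; linarith
    rw [h1, hψ2']
    field_simp
    ring
  -- the limit
  have hT := S17.GFn_tendsto (w := w) (lam := lam) (a := a) hlam0 hgap hB0
  have hGc : S17.GFn w lam a (1 / lam 0)
      = S17.Av w a 0 * (((1/2:ℝ) * (psiVec w lam ⬝ᵥ a)) / (S17.Bv w 0)^2) := by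
    rw [S17.GFn_c hlam0, ← hpsi_m, hpsi_half]
  constructor
  · -- case (i)
    intro hlt
    have hψa_pos : 0 < psiVec w lam ⬝ᵥ a := by
      rw [hpsia]
      exact mul_pos hψ1pos (by linarith)
    have hLpos : 0 < S17.GFn w lam a (1 / lam 0) := by
      rw [hGc]
      have : 0 < (S17.Bv w 0)^2 := by positivity
      exact mul_pos hA0pos (div_pos (by linarith) this)
    have hev1 : ∀ᶠ δ in nhdsWithin (1 / lam 0) (Set.Iio (1 / lam 0)),
        0 < S17.GFn w lam a δ := hT.eventually_const_lt hLpos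
    have hev2 : ∀ᶠ δ in nhdsWithin (1 / lam 0) (Set.Iio (1 / lam 0)),
        δ ∈ Set.Ioo (0:ℝ) (1 / lam 0) :=
      Filter.eventually_of_mem (Ioo_mem_nhdsLT_of_mem ⟨hc0, le_refl _⟩) (fun δ hδ => hδ)
    have hev3 := hev1.and hev2
    rw [Filter.eventually_iff, mem_nhdsLT_iff_exists_Ioo_subset' hc0] at hev3
    obtain ⟨l, hl, hsub⟩ := hev3
    refine ⟨max l 0, ⟨le_max_right _ _, max_lt hl hc0⟩, ?_⟩
    intro δ hδ
    have hδIoo : δ ∈ Set.Ioo l (1 / lam 0) :=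
      ⟨lt_of_le_of_lt (le_max_left _ _) hδ.1, hδ.2⟩
    obtain ⟨hG, hδ0c⟩ := hsub hδIoo
    have hδ0 : 0 ≤ δ := le_of_lt hδ0c.1
    have hkey := S17.keyId (a := a) horth heig hlam0 hle hB0 hδ0 hδ0c.2
    have hepos := S17.eF_pos (lam := lam) hlam0 hle hδ0 hδ0c.2 0
    constructor
    · by_contra hcon
      push_neg at hcon
      have hd : surplus G δ a (p0fn G δ a) - surplus G δ a (pUR a 0) ≤ 0 := by linarith
      have h2 : S17.eF lam 0 δ *
          (surplus G δ a (p0fn G δ a) - surplus G δ a (pUR a 0)) ≤ 0 :=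
        mul_nonpos_of_nonneg_of_nonpos (le_of_lt hepos) hd
      rw [hkey] at h2
      linarith
    · exact S17.profitLt horth heig hlam0 hle haprop hδ0 hδ0c.2
  · -- case (ii)
    intro hlt
    have hψa_neg : psiVec w lam ⬝ᵥ a < 0 := by
      rw [hpsia]
      have : (∑ k ∈ V1, a k) / (V1.card : ℝ) - (∑ k ∈ V2, a k) / (V2.card : ℝ) < 0 := by
        linarith
      exact mul_neg_of_pos_of_neg hψ1pos this
    have hLneg : S17.GFn w lam a (1 / lam 0) < 0 := by
      rw [hGc]
      have h2 : 0 < (S17.Bv w 0)^2 := by positivity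
      have h3 : (1/2:ℝ) * (psiVec w lam ⬝ᵥ a) / (S17.Bv w 0)^2 < 0 :=
        div_neg_of_neg_of_pos (by linarith) h2
      exact mul_neg_of_pos_of_neg hA0pos h3
    have hev1 : ∀ᶠ δ in nhdsWithin (1 / lam 0) (Set.Iio (1 / lam 0)),
        S17.GFn w lam a δ < 0 := hT.eventually_lt_const hLneg
    have hev2 : ∀ᶠ δ in nhdsWithin (1 / lam 0) (Set.Iio (1 / lam 0)),
        δ ∈ Set.Ioo (0:ℝ) (1 / lam 0) :=
      Filter.eventually_of_mem (Ioo_mem_nhdsLT_of_mem ⟨hc0, le_refl _⟩) (fun δ hδ => hδ)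
    have hev3 := hev1.and hev2
    rw [Filter.eventually_iff, mem_nhdsLT_iff_exists_Ioo_subset' hc0] at hev3
    obtain ⟨l, hl, hsub⟩ := hev3
    refine ⟨max l 0, ⟨le_max_right _ _, max_lt hl hc0⟩, ?_⟩
    intro δ hδ
    have hδIoo : δ ∈ Set.Ioo l (1 / lam 0) :=
      ⟨lt_of_le_of_lt (le_max_left _ _) hδ.1, hδ.2⟩
    obtain ⟨hG, hδ0c⟩ := hsub hδIoo
    have hδ0 : 0 ≤ δ := le_of_lt hδ0c.1
    have hkey := S17.keyId (a := a) horth heig hlam0 hle hB0 hδ0 hδ0c.2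
    have hepos := S17.eF_pos (lam := lam) hlam0 hle hδ0 hδ0c.2 0
    constructor
    · by_contra hcon
      push_neg at hcon
      have hd : 0 ≤ surplus G δ a (p0fn G δ a) - surplus G δ a (pUR a 0) := by linarith
      have h2 : 0 ≤ S17.eF lam 0 δ *
          (surplus G δ a (p0fn G δ a) - surplus G δ a (pUR a 0)) :=
        mul_nonneg (le_of_lt hepos) hd
      rw [hkey] at h2
      linarith
    · exact S17.profitLt horth heig hlam0 hle haprop hδ0 hδ0c.2
end

section
/- Assume c = 0, a is not proportional to 𝟙, and 𝟙 is not an eigenvector of G (G is non-regular). Then there exists δ̂ ∈ (0, 1/λ₁] such that for every δ ∈ [0, δ̂): V(p⁰(δ), δ) > V(p^ur, δ) and Π(p⁰(δ), δ) < Π(p^ur, δ); that is, for sufficiently weak spillovers, banning price discrimination harms the firm but benefits consumers. -/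
open Matrix

lemma contH {n : ℕ} (G : Matrix (Fin n) (Fin n) ℝ) :
    ContinuousAt (fun δ : ℝ => Hmat G δ) 0 := by
  have h1 : Continuous (fun δ : ℝ => (1 : Matrix (Fin n) (Fin n) ℝ) - δ • G) := by
    continuity
  have h2 : ContinuousAt Inv.inv ((1 : Matrix (Fin n) (Fin n) ℝ) - (0:ℝ) • G) := by
    apply continuousAt_matrix_inv
    have hd : ((1 : Matrix (Fin n) (Fin n) ℝ) - (0:ℝ) • G).det = 1 := by simp
    rw [hd]
    simpa using NormedRing.inverse_continuousAt (1 : ℝˣ)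
  exact ContinuousAt.comp (f := fun δ : ℝ => (1 : Matrix (Fin n) (Fin n) ℝ) - δ • G)
    (g := Inv.inv) h2 h1.continuousAt

lemma contAux {n : ℕ} (G : Matrix (Fin n) (Fin n) ℝ) (u v : Fin n → ℝ) :
    ContinuousAt (fun δ : ℝ => u ⬝ᵥ (Hmat G δ *ᵥ v)) 0 := by
  have h : Continuous (fun M : Matrix (Fin n) (Fin n) ℝ => u ⬝ᵥ (M *ᵥ v)) :=
    continuous_const.dotProduct (continuous_id.matrix_mulVec continuous_const)
  exact h.continuousAt.comp (contH G)

lemma hH0 {n : ℕ} (G : Matrix (Fin n) (Fin n) ℝ) : Hmat G 0 = 1 := by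
  simp [Hmat]

lemma sumExpand {n : ℕ} (a : Fin n → ℝ) (q : ℝ) :
    (∑ i, (a i - q) * (a i - q)) =
      (∑ i, (a i)^2) - 2*q*(∑ i, a i) + (n:ℝ)*q^2 := by
  have h : ∀ i : Fin n, (a i - q) * (a i - q) = (a i)^2 - 2*q*(a i) + q^2 :=
    fun i => by ring
  rw [Finset.sum_congr rfl (fun i _ => h i), Finset.sum_add_distrib,
    Finset.sum_sub_distrib, ← Finset.mul_sum, Finset.sum_const, Finset.card_univ,
    Fintype.card_fin]
  ring

lemma keyCS {n : ℕ} (hn : 1 ≤ n) (a : Fin n → ℝ)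
    (hap : ¬ ∃ t : ℝ, a = t • onesVec n) :
    (∑ i, a i)^2 < (n:ℝ) * ∑ i, (a i)^2 := by
  have hn' : (0:ℝ) < n := by exact_mod_cast hn
  set S := ∑ i, a i with hS
  set Q := ∑ i, (a i)^2 with hQ
  set m : ℝ := S / n with hm
  have hnn : ∀ i ∈ Finset.univ, 0 ≤ (a i - m) * (a i - m) :=
    fun i _ => mul_self_nonneg _
  have hpos : 0 < ∑ i, (a i - m) * (a i - m) := by
    rcases lt_or_eq_of_le (Finset.sum_nonneg hnn) with h | h
    · exact h
    · exfalso
      apply hap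
      refine ⟨m, funext fun i => ?_⟩
      have := (Finset.sum_eq_zero_iff_of_nonneg hnn).mp h.symm i (Finset.mem_univ i)
      have hai : a i = m := by nlinarith [this]
      simp [hai, onesVec]
  rw [sumExpand] at hpos
  have hm2 : Q - 2*m*S + (n:ℝ)*m^2 = ((n:ℝ)*Q - S^2)/n := by
    field_simp [hm]
    have e : (n:ℝ)*m = S := by rw [hm]; field_simp
    linear_combination ((n:ℝ)*m - S) * e
  rw [hm2] at hpos
  have := (div_pos_iff.mp hpos)
  rcases this with ⟨h1, _⟩ | ⟨_, h2⟩
  · linarith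
  · linarith


open Topology Filter in
set_option maxHeartbeats 1000000 in
theorem stmt18 {n : ℕ} (hn : 1 ≤ n)
    (G : Matrix (Fin n) (Fin n) ℝ) (hGsym : G.IsSymm)
    (hGnn : ∀ i j, 0 ≤ G i j) (hGdiag : ∀ i, G i i = 0)
    (lam1 : ℝ) (hlam1 : lam1 ∈ spectrum ℝ G)
    (hlam1max : ∀ μ ∈ spectrum ℝ G, μ ≤ lam1)
    (hlam1pos : 0 < lam1)
    (hpd : ∀ δ ∈ Set.Ico (0 : ℝ) (1 / lam1), (Hmat G δ).PosDef)
    (a : Fin n → ℝ) (ha : ∀ i, 0 < a i)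
    (haprop : ¬ ∃ t : ℝ, a = t • onesVec n)
    (hnonreg : ¬ ∃ μ : ℝ, G *ᵥ onesVec n = μ • onesVec n) :
    ∃ δhat ∈ Set.Ioc (0 : ℝ) (1 / lam1),
      ∀ δ ∈ Set.Ico (0 : ℝ) δhat,
        surplus G δ a (pUR a 0) < surplus G δ a (p0fn G δ a) ∧
        profit G δ a 0 (p0fn G δ a) < profit G δ a 0 (pUR a 0) := by
  
  have hn' : (0:ℝ) < n := by exact_mod_cast hn
  set S := ∑ i, a i with hS
  set Q := ∑ i, (a i)^2 with hQ
  have hCS : S^2 < (n:ℝ) * Q := keyCS hn a haprop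
  -- the uniform-price coefficient
  set cfun : ℝ → ℝ := fun δ =>
    (onesVec n ⬝ᵥ (Hmat G δ *ᵥ pUR a 0)) / (onesVec n ⬝ᵥ (Hmat G δ *ᵥ onesVec n))
    with hcfun
  have hp0 : ∀ δ, p0fn G δ a = cfun δ • onesVec n := fun δ => rfl
  -- values at δ = 0
  have hden0 : onesVec n ⬝ᵥ (Hmat G 0 *ᵥ onesVec n) = (n:ℝ) := by
    simp [hH0, Matrix.one_mulVec, dotProduct, onesVec]
  have hnum0 : onesVec n ⬝ᵥ (Hmat G 0 *ᵥ pUR a 0) = S / 2 := by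
    simp [hH0, Matrix.one_mulVec, dotProduct, onesVec, pUR, hS, Finset.sum_div]
    exact Finset.sum_congr rfl (fun i _ => by ring)
  have hc0 : cfun 0 = S / (2*n) := by
    rw [hcfun]
    simp only [hnum0, hden0]
    field_simp
  -- continuity of cfun at 0
  have hden0' : onesVec n ⬝ᵥ (Hmat G 0 *ᵥ onesVec n) ≠ 0 := by
    rw [hden0]; positivity
  have hccont : ContinuousAt cfun 0 :=
    (contAux G (onesVec n) (pUR a 0)).div (contAux G (onesVec n) (onesVec n)) hden0'
  -- continuity of the two gap functions at 0
  have hpair : ContinuousAt (fun δ : ℝ => (cfun δ, Hmat G δ)) 0 :=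
    hccont.prodMk (contH G)
  have hFgen : Continuous (fun q : ℝ × Matrix (Fin n) (Fin n) ℝ =>
      (1/2 : ℝ) * ((a - q.1 • onesVec n) ⬝ᵥ ((q.2 * q.2) *ᵥ (a - q.1 • onesVec n))) -
      (1/2 : ℝ) * ((a - pUR a 0) ⬝ᵥ ((q.2 * q.2) *ᵥ (a - pUR a 0)))) := by
    have hv : Continuous (fun q : ℝ × Matrix (Fin n) (Fin n) ℝ => a - q.1 • onesVec n) :=
      continuous_const.sub (continuous_fst.smul continuous_const)
    have hM : Continuous (fun q : ℝ × Matrix (Fin n) (Fin n) ℝ => q.2 * q.2) :=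
      continuous_snd.matrix_mul continuous_snd
    exact (continuous_const.mul (hv.dotProduct (hM.matrix_mulVec hv))).sub
      (continuous_const.mul
        (continuous_const.dotProduct (hM.matrix_mulVec continuous_const)))
  have hF : ContinuousAt
      (fun δ : ℝ => surplus G δ a (p0fn G δ a) - surplus G δ a (pUR a 0)) 0 := by
    have h := hFgen.continuousAt.comp hpair
    simp only [Function.comp_def] at h
    simp only [surplus, hp0]
    exact h
  have hPgen : Continuous (fun q : ℝ × Matrix (Fin n) (Fin n) ℝ =>
      ((pUR a 0 - 0) ⬝ᵥ (q.2 *ᵥ (a - pUR a 0))) -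
      ((q.1 • onesVec n - 0) ⬝ᵥ (q.2 *ᵥ (a - q.1 • onesVec n)))) := by
    have hv : Continuous (fun q : ℝ × Matrix (Fin n) (Fin n) ℝ => a - q.1 • onesVec n) :=
      continuous_const.sub (continuous_fst.smul continuous_const)
    have hw : Continuous (fun q : ℝ × Matrix (Fin n) (Fin n) ℝ => q.1 • onesVec n - 0) :=
      (continuous_fst.smul continuous_const).sub continuous_const
    exact (continuous_const.dotProduct (continuous_snd.matrix_mulVec continuous_const)).sub
      (hw.dotProduct (continuous_snd.matrix_mulVec hv))
  have hP : ContinuousAt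
      (fun δ : ℝ => profit G δ a 0 (pUR a 0) - profit G δ a 0 (p0fn G δ a)) 0 := by
    have h := hPgen.continuousAt.comp hpair
    simp only [Function.comp_def] at h
    simp only [profit, hp0]
    exact h
  -- positivity at δ = 0
  have hsum2 : (∑ i, (a i - (1/2 : ℝ) * (a i + 0)) * (a i - (1/2 : ℝ) * (a i + 0))) = Q/4 := by
    have h : ∀ i : Fin n, (a i - (1/2 : ℝ) * (a i + 0)) * (a i - (1/2 : ℝ) * (a i + 0))
        = (a i)^2 / 4 := fun i => by ring
    rw [Finset.sum_congr rfl (fun i _ => h i), ← Finset.sum_div]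
  have hF0 : 0 < surplus G 0 a (p0fn G 0 a) - surplus G 0 a (pUR a 0) := by
    have e1 : surplus G 0 a (p0fn G 0 a)
        = (1/2 : ℝ) * (Q - 2*(S/(2*n))*S + (n:ℝ)*(S/(2*n))^2) := by
      rw [hp0, hc0]
      simp only [surplus, hH0, Matrix.one_mul, Matrix.one_mulVec, dotProduct,
        Pi.sub_apply, Pi.smul_apply, onesVec, smul_eq_mul, mul_one]
      rw [sumExpand a (S/(2*n))]
    have e2 : surplus G 0 a (pUR a 0) = (1/2 : ℝ) * (Q/4) := by
      simp only [surplus, hH0, Matrix.one_mul, Matrix.one_mulVec, dotProduct,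
        Pi.sub_apply, pUR, Pi.smul_apply, Pi.add_apply, Pi.zero_apply, smul_eq_mul]
      rw [hsum2]
    rw [e1, e2]
    have h3 : (1/2 : ℝ) * (Q - 2*(S/(2*n))*S + (n:ℝ)*(S/(2*n))^2) - (1/2:ℝ)*(Q/4)
        = 3/8 * (((n:ℝ)*Q - S^2)/n) := by
      field_simp
      ring
    rw [h3]
    have : 0 < (n:ℝ)*Q - S^2 := by linarith
    positivity
  have hP0 : 0 < profit G 0 a 0 (pUR a 0) - profit G 0 a 0 (p0fn G 0 a) := by
    have e1 : profit G 0 a 0 (pUR a 0) = Q/4 := by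
      simp only [profit, hH0, Matrix.one_mulVec, dotProduct, Pi.sub_apply, pUR,
        Pi.smul_apply, Pi.add_apply, Pi.zero_apply, smul_eq_mul, sub_zero]
      have h : ∀ i : Fin n, ((1/2 : ℝ) * (a i + 0)) * (a i - (1/2 : ℝ) * (a i + 0))
          = (a i)^2 / 4 := fun i => by ring
      rw [Finset.sum_congr rfl (fun i _ => h i), ← Finset.sum_div]
    have e2 : profit G 0 a 0 (p0fn G 0 a) = S^2/(2*n) - (n:ℝ)*(S/(2*n))^2 := by
      rw [hp0, hc0]
      simp only [profit, hH0, Matrix.one_mulVec, dotProduct, Pi.sub_apply,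
        Pi.smul_apply, onesVec, smul_eq_mul, mul_one, Pi.zero_apply, sub_zero]
      have h : ∀ i : Fin n, (S/(2*n)) * (a i - S/(2*n))
          = (S/(2*n)) * a i - (S/(2*n))^2 := fun i => by ring
      rw [Finset.sum_congr rfl (fun i _ => h i), Finset.sum_sub_distrib,
        ← Finset.mul_sum, Finset.sum_const, Finset.card_univ, Fintype.card_fin, ← hS]
      push_cast
      field_simp
      ring_nf
      have hnn : (n:ℝ)^2 * (n:ℝ)⁻¹^2 = 1 := by rw [← mul_pow, mul_inv_cancel₀ hn'.ne', one_pow]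
      rw [mul_assoc (S^2), hnn]
      ring
    rw [e1, e2]
    have h3 : Q/4 - (S^2/(2*n) - (n:ℝ)*(S/(2*n))^2) = (((n:ℝ)*Q - S^2)/n)/4 := by
      field_simp
      ring
    rw [h3]
    have : 0 < (n:ℝ)*Q - S^2 := by linarith
    positivity
  -- conclude on a small interval
  have hev : ∀ᶠ δ in 𝓝 (0:ℝ),
      (0 < surplus G δ a (p0fn G δ a) - surplus G δ a (pUR a 0)) ∧
      (0 < profit G δ a 0 (pUR a 0) - profit G δ a 0 (p0fn G δ a)) :=
    (hF.eventually (eventually_gt_nhds hF0)).and (hP.eventually (eventually_gt_nhds hP0))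
  obtain ⟨ε, hε, hball⟩ := Metric.eventually_nhds_iff.mp hev
  refine ⟨min ε (1/lam1), ⟨lt_min hε (by positivity), min_le_right _ _⟩, ?_⟩
  intro δ hδ
  have hdist : dist δ 0 < ε := by
    rw [Real.dist_eq, sub_zero, abs_of_nonneg hδ.1]
    exact lt_of_lt_of_le hδ.2 (min_le_left _ _)
  obtain ⟨h1, h2⟩ := hball hdist
  exact ⟨by linarith, by linarith⟩
end

section
/- Define the alternative consumer surplus V_AV(p) := (1/2)·(a − p)ᵀ H (a − p). For every τ ∈ [0, 1]: the price p⁺ := p^ur − √(1−τ)·(a−c)/2 satisfies Π(p⁺) = τ·Π(p^ur) and is the unique maximizer of V_AV over the set {p ∈ ℝⁿ : Π(p) ≥ τ·Π(p^ur)}; and the price p⁻ := p^ur + √(1−τ)·(a−c)/2 satisfies Π(p⁻) = τ·Π(p^ur) and is the unique minimizer of V_AV over the same set. Consequently, every p with Π(p) ≥ τ·Π(p^ur) satisfies (1 − √(1−τ))²·V_AV(p^ur) ≤ V_AV(p) ≤ (1 + √(1−τ))²·V_AV(p^ur). -/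
open Matrix

/-- Alternative consumer surplus V_AV(p) = (1/2)(a − p)ᵀ H (a − p). -/
noncomputable def surplusAV {n : ℕ} (G : Matrix (Fin n) (Fin n) ℝ) (δ : ℝ)
    (a p : Fin n → ℝ) : ℝ :=
  (1 / 2 : ℝ) * ((a - p) ⬝ᵥ (Hmat G δ *ᵥ (a - p)))


section Aux
variable {n : ℕ} (H : Matrix (Fin n) (Fin n) ℝ)

lemma symmB (hH : Hᵀ = H) (x y : Fin n → ℝ) :
    x ⬝ᵥ (H *ᵥ y) = y ⬝ᵥ (H *ᵥ x) := by
  calc x ⬝ᵥ (H *ᵥ y) = (x ᵥ* H) ⬝ᵥ y := dotProduct_mulVec ..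
    _ = (x ᵥ* Hᵀ) ⬝ᵥ y := by rw [hH]
    _ = (H *ᵥ x) ⬝ᵥ y := by rw [vecMul_transpose]
    _ = y ⬝ᵥ (H *ᵥ x) := dotProduct_comm ..

lemma expandB (α β : ℝ) (x y : Fin n → ℝ) :
    (α • x + β • y) ⬝ᵥ (H *ᵥ (α • x + β • y)) =
      α^2 * (x ⬝ᵥ (H *ᵥ x)) + α*β*(x ⬝ᵥ (H *ᵥ y)) + α*β*(y ⬝ᵥ (H *ᵥ x))
        + β^2 * (y ⬝ᵥ (H *ᵥ y)) := by
  simp [Matrix.mulVec_add, Matrix.mulVec_smul, dotProduct_add, add_dotProduct,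
    dotProduct_smul, smul_dotProduct, smul_eq_mul]
  ring

lemma pdB (hpd : H.PosDef) (x : Fin n → ℝ) (hx : x ≠ 0) : 0 < x ⬝ᵥ (H *ᵥ x) := by
  simpa using hpd.dotProduct_mulVec_pos hx

lemma nnB (hpd : H.PosDef) (x : Fin n → ℝ) : 0 ≤ x ⬝ᵥ (H *ᵥ x) := by
  rcases eq_or_ne x 0 with h | h
  · simp [h]
  · exact (pdB H hpd x h).le

end Aux

section CS
variable {n : ℕ} {H : Matrix (Fin n) (Fin n) ℝ}

lemma csB (hH : Hᵀ = H) (hpd : H.PosDef) (m v : Fin n → ℝ) (hQ : 0 < m ⬝ᵥ (H *ᵥ m)) :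
    (m ⬝ᵥ (H *ᵥ v))^2 ≤ (m ⬝ᵥ (H *ᵥ m)) * (v ⬝ᵥ (H *ᵥ v)) := by
  set Q := m ⬝ᵥ (H *ᵥ m) with hQdef
  set r := m ⬝ᵥ (H *ᵥ v) with hrdef
  set t := v ⬝ᵥ (H *ᵥ v) with htdef
  have hw := nnB H hpd (Q • v + (-r) • m)
  rw [expandB H Q (-r) v m] at hw
  have hvm : v ⬝ᵥ (H *ᵥ m) = r := symmB H hH v m
  rw [hvm] at hw
  have h0 : 0 ≤ Q * (Q * t - r^2) := by nlinarith
  nlinarith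

lemma csB_eq (hH : Hᵀ = H) (hpd : H.PosDef) (m v : Fin n → ℝ) (hQ : 0 < m ⬝ᵥ (H *ᵥ m))
    (heq : (m ⬝ᵥ (H *ᵥ v))^2 = (m ⬝ᵥ (H *ᵥ m)) * (v ⬝ᵥ (H *ᵥ v))) :
    (m ⬝ᵥ (H *ᵥ m)) • v = (m ⬝ᵥ (H *ᵥ v)) • m := by
  set Q := m ⬝ᵥ (H *ᵥ m) with hQdef
  set r := m ⬝ᵥ (H *ᵥ v) with hrdef
  set t := v ⬝ᵥ (H *ᵥ v) with htdef
  have hw : (Q • v + (-r) • m) ⬝ᵥ (H *ᵥ (Q • v + (-r) • m)) = 0 := by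
    rw [expandB H Q (-r) v m, symmB H hH v m]
    nlinarith
  have hzero : Q • v + (-r) • m = 0 := by
    by_contra hne
    exact absurd hw (ne_of_gt (pdB H hpd _ hne))
  have : Q • v = r • m := by
    have := hzero
    rw [neg_smul, add_neg_eq_zero] at this
    exact this
  linear_combination (norm := module) this

lemma abs_le_of_sq_le {a b : ℝ} (hb : 0 ≤ b) (h : a^2 ≤ b^2) : |a| ≤ b := by
  have := Real.sqrt_le_sqrt h
  rwa [Real.sqrt_sq_eq_abs, Real.sqrt_sq hb] at this

lemma scalar_bounds {Q t r s : ℝ} (hQ : 0 < Q) (hs0 : 0 ≤ s) (hs1 : s ≤ 1)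
    (ht : 0 ≤ t) (hts : t ≤ s^2*Q) (hcs : r^2 ≤ Q*t) :
    (1-s)^2*Q ≤ Q + 2*r + t ∧ Q + 2*r + t ≤ (1+s)^2*Q ∧
    (Q + 2*r + t = (1+s)^2*Q → r = s*Q ∧ r^2 = Q*t) ∧
    (Q + 2*r + t = (1-s)^2*Q → r = -(s*Q) ∧ r^2 = Q*t) := by
  set q := Real.sqrt Q with hqdef
  set x := Real.sqrt t with hxdef
  have hq0 : 0 ≤ q := Real.sqrt_nonneg _
  have hx0 : 0 ≤ x := Real.sqrt_nonneg _
  have hq2 : q^2 = Q := Real.sq_sqrt hQ.le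
  have hx2 : x^2 = t := Real.sq_sqrt ht
  have hsq0 : 0 ≤ s*q := mul_nonneg hs0 hq0
  have hsQ0 : 0 ≤ s*Q := mul_nonneg hs0 hQ.le
  have hqx0 : 0 ≤ q*x := mul_nonneg hq0 hx0
  have hxsq : x ≤ s*q := by
    have h1 : x^2 ≤ (s*q)^2 := by rw [hx2]; nlinarith [hq2]
    have := abs_le_of_sq_le hsq0 h1
    calc x ≤ |x| := le_abs_self x
    _ ≤ s*q := this
  have hr2 : r^2 ≤ (s*Q)^2 := by nlinarith [mul_le_mul_of_nonneg_left hts hQ.le]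
  have hrle : r ≤ s*Q := le_trans (le_abs_self r) (abs_le_of_sq_le hsQ0 hr2)
  have hr3 : r^2 ≤ (q*x)^2 := by nlinarith [hq2, hx2]
  have hrge : -(q*x) ≤ r := by
    have := abs_le_of_sq_le hqx0 hr3
    have := neg_abs_le r
    linarith [abs_le_of_sq_le hqx0 hr3]
  have e : (q-x)^2 = Q - 2*(q*x) + t := by rw [← hq2, ← hx2]; ring
  have e2 : ((1-s)*q)^2 = (1-s)^2*Q := by rw [← hq2]; ring
  have e3 : (1+s)^2*Q = Q + 2*(s*Q) + s^2*Q := by ring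
  have h3 : (1-s)*q ≤ q - x := by nlinarith
  have h4 : 0 ≤ (1-s)*q := mul_nonneg (by linarith) hq0
  have hchain2 : ((1-s)*q)^2 ≤ (q - x)^2 := pow_le_pow_left₀ h4 h3 2
  have hlow : (1-s)^2*Q ≤ Q + 2*r + t := by linarith
  refine ⟨hlow, by linarith, ?_, ?_⟩
  · intro heq
    have hr : r = s*Q := by linarith
    have htq : t = s^2*Q := by linarith
    refine ⟨hr, by rw [hr, htq]; ring⟩
  · intro heq
    have hqx : (q - x)^2 = ((1-s)*q)^2 := by linarith
    have hqx2 : q - x = (1-s)*q := by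
      have h5 := congrArg Real.sqrt hqx
      rwa [Real.sqrt_sq (le_trans h4 h3), Real.sqrt_sq h4] at h5
    have hx' : x = s*q := by linarith
    have htq : t = s^2*Q := by rw [← hx2, hx']; linear_combination s^2 * hq2
    have hr : r = -(q*x) := by linarith
    have hr' : r = -(s*Q) := by rw [hr, hx']; linear_combination (-s) * hq2
    refine ⟨hr', by rw [hr', htq]; ring⟩

end CS

section Decomp
variable {n : ℕ} {H : Matrix (Fin n) (Fin n) ℝ}

lemma profit_decomp (hH : Hᵀ = H) (m v : Fin n → ℝ) :
    (m - v) ⬝ᵥ (H *ᵥ (m + v)) = m ⬝ᵥ (H *ᵥ m) - v ⬝ᵥ (H *ᵥ v) := by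
  simp only [Matrix.mulVec_add, dotProduct_add, sub_dotProduct]
  rw [symmB H hH v m]
  ring

lemma sum_decomp (hH : Hᵀ = H) (m v : Fin n → ℝ) :
    (m + v) ⬝ᵥ (H *ᵥ (m + v)) =
      m ⬝ᵥ (H *ᵥ m) + 2 * (m ⬝ᵥ (H *ᵥ v)) + v ⬝ᵥ (H *ᵥ v) := by
  simp only [Matrix.mulVec_add, dotProduct_add, add_dotProduct]
  rw [symmB H hH v m]
  ring

end Decomp

theorem stmt19 {n : ℕ} (hn : 1 ≤ n)
    (G : Matrix (Fin n) (Fin n) ℝ) (hGsym : G.IsSymm)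
    (hGnn : ∀ i j, 0 ≤ G i j) (hGdiag : ∀ i, G i i = 0)
    (δ : ℝ) (hδ : 0 ≤ δ)
    (lam1 : ℝ) (hlam1 : lam1 ∈ spectrum ℝ G)
    (hlam1max : ∀ μ ∈ spectrum ℝ G, μ ≤ lam1)
    (hA1 : 0 < 1 - δ * lam1)
    (hpd : (Hmat G δ).PosDef)
    (a c : Fin n → ℝ) (hac : ∀ i, c i < a i) :
    ∀ τ ∈ Set.Icc (0 : ℝ) 1,
      (profit G δ a c (pUR a c - Real.sqrt (1 - τ) • ((1 / 2 : ℝ) • (a - c))) =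
          τ * profit G δ a c (pUR a c) ∧
        (∀ p : Fin n → ℝ, τ * profit G δ a c (pUR a c) ≤ profit G δ a c p →
          surplusAV G δ a p ≤
            surplusAV G δ a (pUR a c - Real.sqrt (1 - τ) • ((1 / 2 : ℝ) • (a - c)))) ∧
        (∀ p : Fin n → ℝ, τ * profit G δ a c (pUR a c) ≤ profit G δ a c p →
          surplusAV G δ a p =
            surplusAV G δ a (pUR a c - Real.sqrt (1 - τ) • ((1 / 2 : ℝ) • (a - c))) →
          p = pUR a c - Real.sqrt (1 - τ) • ((1 / 2 : ℝ) • (a - c)))) ∧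
      (profit G δ a c (pUR a c + Real.sqrt (1 - τ) • ((1 / 2 : ℝ) • (a - c))) =
          τ * profit G δ a c (pUR a c) ∧
        (∀ p : Fin n → ℝ, τ * profit G δ a c (pUR a c) ≤ profit G δ a c p →
          surplusAV G δ a (pUR a c + Real.sqrt (1 - τ) • ((1 / 2 : ℝ) • (a - c))) ≤
            surplusAV G δ a p) ∧
        (∀ p : Fin n → ℝ, τ * profit G δ a c (pUR a c) ≤ profit G δ a c p →
          surplusAV G δ a p =
            surplusAV G δ a (pUR a c + Real.sqrt (1 - τ) • ((1 / 2 : ℝ) • (a - c))) →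
          p = pUR a c + Real.sqrt (1 - τ) • ((1 / 2 : ℝ) • (a - c)))) ∧
      (∀ p : Fin n → ℝ, τ * profit G δ a c (pUR a c) ≤ profit G δ a c p →
        (1 - Real.sqrt (1 - τ)) ^ 2 * surplusAV G δ a (pUR a c) ≤ surplusAV G δ a p ∧
        surplusAV G δ a p ≤ (1 + Real.sqrt (1 - τ)) ^ 2 * surplusAV G δ a (pUR a c)) := by
  intro τ hτ
  obtain ⟨hτ0, hτ1⟩ := hτ
  set H := Hmat G δ with hHdef
  have hHsym : Hᵀ = H := by
    have h1 : Hᴴ = H := hpd.1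
    rwa [Matrix.conjTranspose_eq_transpose_of_trivial] at h1
  set m : Fin n → ℝ := (1 / 2 : ℝ) • (a - c) with hmdef
  have hm0 : m ≠ 0 := by
    intro h
    have h3 : m ⟨0, hn⟩ = 0 := by rw [h]; rfl
    rw [hmdef] at h3
    simp only [Pi.smul_apply, Pi.sub_apply, smul_eq_mul] at h3
    linarith [hac ⟨0, hn⟩]
  set Q := m ⬝ᵥ (H *ᵥ m) with hQdef
  have hQ : 0 < Q := pdB H hpd m hm0
  set s := Real.sqrt (1 - τ) with hsdef
  have hs0 : 0 ≤ s := Real.sqrt_nonneg _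
  have hs2 : s ^ 2 = 1 - τ := Real.sq_sqrt (by linarith)
  have hs1 : s ≤ 1 := by nlinarith
  have hpurm : pUR a c = a - m := by
    ext i
    simp [pUR, hmdef, Pi.smul_apply, Pi.sub_apply, Pi.add_apply, smul_eq_mul]
    ring
  -- profit decomposition
  have hprof : ∀ p : Fin n → ℝ,
      profit G δ a c p = Q - ((a - p - m) ⬝ᵥ (H *ᵥ (a - p - m))) := by
    intro p
    have hpc : p - c = m - (a - p - m) := by
      ext i
      simp [hmdef, Pi.smul_apply, Pi.sub_apply, smul_eq_mul]
      ring
    have hap2 : a - p = m + (a - p - m) := by abel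
    have hd := profit_decomp hHsym m (a - p - m)
    rw [← hpc, ← hap2] at hd
    unfold profit
    rw [← hHdef]
    exact hd
  have hsurp : ∀ p : Fin n → ℝ,
      2 * surplusAV G δ a p =
        Q + 2 * (m ⬝ᵥ (H *ᵥ (a - p - m))) + ((a - p - m) ⬝ᵥ (H *ᵥ (a - p - m))) := by
    intro p
    have hap2 : a - p = m + (a - p - m) := by abel
    have hd := sum_decomp hHsym m (a - p - m)
    rw [← hap2] at hd
    unfold surplusAV
    rw [← hHdef]
    linarith [hd]
  have hpur : profit G δ a c (pUR a c) = Q := by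
    rw [hprof]
    have h0 : a - pUR a c - m = 0 := by rw [hpurm]; abel
    rw [h0]
    simp
  have hsurpur : surplusAV G δ a (pUR a c) = (1 / 2) * Q := by
    have h := hsurp (pUR a c)
    have h0 : a - pUR a c - m = 0 := by rw [hpurm]; abel
    rw [h0] at h
    simp at h
    linarith
  -- the special points
  have hvp : a - (pUR a c - s • m) - m = s • m := by rw [hpurm]; abel
  have hvm2 : a - (pUR a c + s • m) - m = (-s) • m := by
    rw [hpurm, neg_smul]; abel
  have hsmm : ∀ u : ℝ, (u • m) ⬝ᵥ (H *ᵥ (u • m)) = u ^ 2 * Q := by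
    intro u
    simp only [Matrix.mulVec_smul, dotProduct_smul, smul_dotProduct, smul_eq_mul]
    rw [hQdef]; ring
  have hmsm : ∀ u : ℝ, m ⬝ᵥ (H *ᵥ (u • m)) = u * Q := by
    intro u
    simp only [Matrix.mulVec_smul, dotProduct_smul, smul_eq_mul]
    rfl
  have hprofp : profit G δ a c (pUR a c - s • m) = τ * Q := by
    rw [hprof, hvp, hsmm]; linear_combination (-Q) * hs2
  have hprofm : profit G δ a c (pUR a c + s • m) = τ * Q := by
    rw [hprof, hvm2, hsmm]; linear_combination (-Q) * hs2
  have hsurfp : 2 * surplusAV G δ a (pUR a c - s • m) = (1 + s) ^ 2 * Q := by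
    rw [hsurp, hvp, hsmm, hmsm]; ring
  have hsurfm : 2 * surplusAV G δ a (pUR a c + s • m) = (1 - s) ^ 2 * Q := by
    rw [hsurp, hvm2, hsmm, hmsm]; ring
  -- main bound for any feasible p
  have main : ∀ p : Fin n → ℝ, τ * profit G δ a c (pUR a c) ≤ profit G δ a c p →
      (1 - s) ^ 2 * Q ≤ 2 * surplusAV G δ a p ∧
      2 * surplusAV G δ a p ≤ (1 + s) ^ 2 * Q ∧
      (2 * surplusAV G δ a p = (1 + s) ^ 2 * Q → p = pUR a c - s • m) ∧
      (2 * surplusAV G δ a p = (1 - s) ^ 2 * Q → p = pUR a c + s • m) := by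
    intro p hp
    rw [hpur, hprof p] at hp
    set v : Fin n → ℝ := a - p - m with hvdef
    set t := v ⬝ᵥ (H *ᵥ v) with htdef
    set r := m ⬝ᵥ (H *ᵥ v) with hrdef
    have ht0 : 0 ≤ t := nnB H hpd v
    have hts : t ≤ s ^ 2 * Q := by
      have hring : (1 - τ) * Q = Q - τ * Q := by ring
      rw [hs2]
      linarith
    have hcs : r ^ 2 ≤ Q * t := csB hHsym hpd m v hQ
    obtain ⟨hlow, hupp, hmax, hmin⟩ := scalar_bounds hQ hs0 hs1 ht0 hts hcs
    have hsp := hsurp p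
    refine ⟨by linarith, by linarith, ?_, ?_⟩
    · intro heq
      have heq2 : Q + 2 * r + t = (1 + s) ^ 2 * Q := by linarith
      obtain ⟨hr, hr2⟩ := hmax heq2
      have hQv : Q • v = r • m := csB_eq hHsym hpd m v hQ hr2
      have hQv2 : Q • v = Q • (s • m) := by
        rw [hQv, hr, mul_comm s Q, ← smul_smul]
      have hvs : a - p - m = s • m := smul_right_injective (Fin n → ℝ) hQ.ne' hQv2
      have hp' : p = a - m - s • m := by rw [← hvs]; abel
      rw [hpurm]
      exact hp'
    · intro heq
      have heq2 : Q + 2 * r + t = (1 - s) ^ 2 * Q := by linarith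
      obtain ⟨hr, hr2⟩ := hmin heq2
      have hQv : Q • v = r • m := csB_eq hHsym hpd m v hQ hr2
      have hQv2 : Q • v = Q • ((-s) • m) := by
        have hscal : -(s * Q) = Q * (-s) := by ring
        rw [hQv, hr, hscal, ← smul_smul]
      have hvs : a - p - m = (-s) • m := smul_right_injective (Fin n → ℝ) hQ.ne' hQv2
      have hp' : p = a - m - (-s) • m := by rw [← hvs]; abel
      rw [hpurm]
      rw [hp', neg_smul, sub_neg_eq_add]
  refine ⟨⟨?_, ?_, ?_⟩, ⟨?_, ?_, ?_⟩, ?_⟩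
  · rw [hprofp, hpur]
  · intro p hp
    have h := (main p hp).2.1
    linarith [hsurfp]
  · intro p hp heq
    apply (main p hp).2.2.1
    rw [heq]
    exact hsurfp
  · rw [hprofm, hpur]
  · intro p hp
    have h := (main p hp).1
    linarith [hsurfm]
  · intro p hp heq
    apply (main p hp).2.2.2
    rw [heq]
    exact hsurfm
  · intro p hp
    obtain ⟨h1, h2, _, _⟩ := main p hp
    rw [hsurpur]
    constructor <;> nlinarith
end
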